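/- In the bipolar extension L̃ of a finite lattice L, the join-irreducible elements are exactly the pairs (j,⊥) and (⊥,j) for j a join-irreducible element of L. -/

import Mathlib

/-- In a finite lattice, "join-irreducible" can be characterized as
"covers exactly one element"; we use this characterization uniformly. -/
def CoversUniqueElem {α : Type*} [PartialOrder α] (a : α) : Prop :=
  ∃! b : α, b ⋖ a

section Aux

variable {L : Type*} [Lattice L] [OrderBot L]

private lemma BP_le_iff {a b : {p : L × L // p.1 ⊓ p.2 = ⊥}} :
    a ≤ b ↔ a.val.1 ≤ b.val.1 ∧ a.val.2 ≤ b.val.2 := by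
  rw [← Subtype.coe_le_coe, Prod.le_def]

private lemma BP_lt_iff {a b : {p : L × L // p.1 ⊓ p.2 = ⊥}} :
    a < b ↔ a ≤ b ∧ a.val ≠ b.val := by
  rw [lt_iff_le_and_ne]
  exact and_congr_right fun _ => ⟨fun h hv => h (Subtype.ext hv), fun h hv => h (congrArg _ hv)⟩

private lemma BP_covBy_iff_left {a b : {p : L × L // p.1 ⊓ p.2 = ⊥}} (ha : a.val.2 = ⊥) :
    b ⋖ a ↔ b.val.2 = ⊥ ∧ b.val.1 ⋖ a.val.1 := by
  constructor
  · rintro ⟨hlt, hmax⟩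
    obtain ⟨hle, hne⟩ := BP_lt_iff.1 hlt
    have h2 : b.val.2 = ⊥ := le_bot_iff.1 ((BP_le_iff.1 hle).2.trans ha.le)
    have h1 : b.val.1 < a.val.1 :=
      lt_of_le_of_ne (BP_le_iff.1 hle).1 fun h => hne (Prod.ext h (h2.trans ha.symm))
    refine ⟨h2, h1, fun c hc1 hc2 => ?_⟩
    have hx : b < (⟨(c, ⊥), inf_bot_eq c⟩ : {p : L × L // p.1 ⊓ p.2 = ⊥}) :=
      BP_lt_iff.2 ⟨BP_le_iff.2 ⟨hc1.le, h2.le⟩,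
        fun h => absurd (congrArg Prod.fst h) hc1.ne⟩
    have hy : (⟨(c, ⊥), inf_bot_eq c⟩ : {p : L × L // p.1 ⊓ p.2 = ⊥}) < a :=
      BP_lt_iff.2 ⟨BP_le_iff.2 ⟨hc2.le, bot_le⟩,
        fun h => absurd (congrArg Prod.fst h) hc2.ne⟩
    exact hmax hx hy
  · rintro ⟨h2, hcov⟩
    constructor
    · exact BP_lt_iff.2 ⟨BP_le_iff.2 ⟨hcov.le, by rw [h2, ha]⟩,
        fun h => hcov.ne (congrArg Prod.fst h)⟩
    · rintro c hc1 hc2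
      have hc2' := BP_le_iff.1 hc2.le
      have hcbot : c.val.2 = ⊥ := le_bot_iff.1 (hc2'.2.trans ha.le)
      have hb1 : b.val.1 < c.val.1 :=
        lt_of_le_of_ne (BP_le_iff.1 hc1.le).1 fun h =>
          hc1.ne (Subtype.ext (Prod.ext h (h2.trans hcbot.symm)))
      have hc1lt : c.val.1 < a.val.1 :=
        lt_of_le_of_ne hc2'.1 fun h => hc2.ne (Subtype.ext (Prod.ext h (hcbot.trans ha.symm)))
      exact hcov.2 hb1 hc1lt

private lemma BP_CUE_left {a : {p : L × L // p.1 ⊓ p.2 = ⊥}} (ha : a.val.2 = ⊥) :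
    CoversUniqueElem a ↔ CoversUniqueElem a.val.1 := by
  constructor
  · rintro ⟨b, hb, hub⟩
    obtain ⟨hb2, hb1⟩ := (BP_covBy_iff_left ha).1 hb
    refine ⟨b.val.1, hb1, fun j hj => ?_⟩
    have := hub ⟨(j, ⊥), inf_bot_eq j⟩ ((BP_covBy_iff_left ha).2 ⟨rfl, hj⟩)
    exact congrArg (fun z => z.val.1) this
  · rintro ⟨j, hj, huj⟩
    refine ⟨⟨(j, ⊥), inf_bot_eq j⟩, (BP_covBy_iff_left ha).2 ⟨rfl, hj⟩, fun b hb => ?_⟩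
    obtain ⟨hb2, hb1⟩ := (BP_covBy_iff_left ha).1 hb
    exact Subtype.ext (Prod.ext (huj _ hb1) hb2)

/-- Swap order isomorphism of the bipolar extension. -/
private def BPswap : {p : L × L // p.1 ⊓ p.2 = ⊥} ≃o {p : L × L // p.1 ⊓ p.2 = ⊥} where
  toFun p := ⟨(p.val.2, p.val.1), by rw [inf_comm]; exact p.prop⟩
  invFun p := ⟨(p.val.2, p.val.1), by rw [inf_comm]; exact p.prop⟩
  left_inv p := rfl
  right_inv p := rfl
  map_rel_iff' := by
    intro p q
    simp only [Equiv.coe_fn_mk, BP_le_iff]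
    exact and_comm

private lemma CUE_iso {α β : Type*} [PartialOrder α] [PartialOrder β] (e : α ≃o β) (a : α) :
    CoversUniqueElem (e a) ↔ CoversUniqueElem a := by
  constructor
  · rintro ⟨b, hb, hub⟩
    refine ⟨e.symm b, ?_, fun c hc => ?_⟩
    · have : e (e.symm b) ⋖ e a := by rwa [e.apply_symm_apply]
      exact (apply_covBy_apply_iff e).1 this
    · have := hub (e c) ((apply_covBy_apply_iff e).2 hc)
      simpa using congrArg e.symm this
  · rintro ⟨b, hb, hub⟩
    refine ⟨e b, (apply_covBy_apply_iff e).2 hb, fun c hc => ?_⟩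
    have : e (e.symm c) ⋖ e a := by rwa [e.apply_symm_apply]
    have := hub (e.symm c) ((apply_covBy_apply_iff e).1 this)
    simpa using congrArg e this

end Aux

/-- The join-irreducible elements of the bipolar extension `L̃` of a finite lattice `L`
are exactly the pairs `(j, ⊥)` and `(⊥, j)` for `j` join-irreducible in `L`. -/
theorem bipolar_ext_joinIrreducible_iff
    (L : Type*) [Lattice L] [OrderBot L] [Fintype L]
    (a : {p : L × L // p.1 ⊓ p.2 = ⊥}) :
    CoversUniqueElem a ↔
      ∃ j : L, CoversUniqueElem j ∧ (a.val = (j, ⊥) ∨ a.val = (⊥, j)) := by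
  constructor
  · intro h
    -- first show one component is ⊥
    have hbot : a.val.1 = ⊥ ∨ a.val.2 = ⊥ := by
      by_contra hcon
      push_neg at hcon
      obtain ⟨h1, h2⟩ := hcon
      obtain ⟨b, hb, hub⟩ := h
      have hlt1 : (⟨(a.val.1, ⊥), inf_bot_eq _⟩ : {p : L × L // p.1 ⊓ p.2 = ⊥}) < a :=
        BP_lt_iff.2 ⟨BP_le_iff.2 ⟨le_rfl, bot_le⟩,
          fun hv => h2 ((congrArg Prod.snd hv).symm)⟩
      have hlt2 : (⟨(⊥, a.val.2), by rw [bot_inf_eq]⟩ : {p : L × L // p.1 ⊓ p.2 = ⊥}) < a :=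
        BP_lt_iff.2 ⟨BP_le_iff.2 ⟨bot_le, le_rfl⟩,
          fun hv => h1 ((congrArg Prod.fst hv).symm)⟩
      obtain ⟨c1, hc1le, hc1⟩ := exists_le_covBy_of_lt hlt1
      obtain ⟨c2, hc2le, hc2⟩ := exists_le_covBy_of_lt hlt2
      have e1 := hub c1 hc1
      have e2 := hub c2 hc2
      have : a ≤ c1 := BP_le_iff.2
        ⟨(BP_le_iff.1 hc1le).1, by rw [e1, ← e2]; exact (BP_le_iff.1 hc2le).2⟩
      exact absurd this (not_le_of_gt hc1.lt)
    rcases hbot with h1 | h2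
    · refine ⟨a.val.2, ?_, Or.inr ?_⟩
      · have := (CUE_iso BPswap a).2 h
        rwa [BP_CUE_left (by exact h1)] at this
      · exact Prod.ext h1 rfl
    · exact ⟨a.val.1, (BP_CUE_left h2).1 h, Or.inl (Prod.ext rfl h2)⟩
  · rintro ⟨j, hj, hcase | hcase⟩
    · exact (BP_CUE_left (by rw [hcase])).2 (by rw [hcase]; exact hj)
    · refine (CUE_iso BPswap a).1 ?_
      have e1 : a.val.1 = ⊥ := by rw [hcase]
      have e2 : a.val.2 = j := by rw [hcase]
      have hswap : (BPswap a).val = (j, ⊥) := Prod.ext e2 e1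
      refine (BP_CUE_left (by rw [hswap])).2 ?_
      show CoversUniqueElem (BPswap a).val.1
      rw [hswap]; exact hj
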